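/- For every nonzero integer n, the complex number e^{2√2·π·n·i} satisfies |e^{2√2·π·n·i} − 1| > 4/(2√2·|n| + 1). -/

import Mathlib

lemma abs_exp_I_sub_one (θ : ℝ) :
    ‖Complex.exp ((θ:ℂ) * Complex.I) - 1‖ = 2 * |Real.sin (θ/2)| := by
  have e1 : Complex.exp ((θ:ℂ) * Complex.I)
      = Complex.exp ((θ:ℂ)/2 * Complex.I) * Complex.exp ((θ:ℂ)/2 * Complex.I) := by
    rw [← Complex.exp_add]; ring_nf
  have e2 : Complex.exp ((θ:ℂ)/2 * Complex.I) * Complex.exp (-((θ:ℂ)/2) * Complex.I) = 1 := by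
    rw [← Complex.exp_add, show (θ:ℂ)/2*Complex.I + -((θ:ℂ)/2)*Complex.I = 0 from by ring,
      Complex.exp_zero]
  have h : Complex.exp ((θ:ℂ) * Complex.I) - 1
      = Complex.exp (((θ/2 : ℝ):ℂ) * Complex.I) * (2 * Complex.I * Complex.sin ((θ/2 : ℝ):ℂ)) := by
    rw [Complex.sin, show ((θ/2:ℝ):ℂ) = (θ:ℂ)/2 from by push_cast; ring]
    linear_combination e1 + e2 + (Complex.exp ((θ:ℂ)/2*Complex.I)^2 -
      Complex.exp ((θ:ℂ)/2*Complex.I) * Complex.exp (-((θ:ℂ)/2)*Complex.I)) * Complex.I_sq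
  rw [h, norm_mul, Complex.norm_exp_ofReal_mul_I, one_mul, norm_mul, norm_mul,
    Complex.norm_two, Complex.norm_I, ← Complex.ofReal_sin, Complex.norm_real, Real.norm_eq_abs]
  ring

/-- For every nonzero integer `n`, `|e^{2√2·π·n·i} − 1| > 4/(2√2·|n| + 1)`. -/
theorem stmt_3 (n : ℤ) (hn : n ≠ 0) :
    4 / (2 * Real.sqrt 2 * |(n : ℝ)| + 1) <
      ‖Complex.exp ((2 * Real.sqrt 2 * Real.pi * (n : ℝ) : ℝ) * Complex.I) - 1‖ := by
  set s : ℝ := Real.sqrt 2 with hs_def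
  have hs2 : s ^ 2 = 2 := Real.sq_sqrt (by norm_num)
  have hs0 : 0 ≤ s := Real.sqrt_nonneg 2
  set x : ℝ := s * n with hx_def
  set m : ℤ := round x with hm_def
  set y : ℝ := x - m with hy_def
  have hd : |y| ≤ 1/2 := by
    simpa [hy_def] using abs_sub_round x
  have hn0 : (n:ℝ) ≠ 0 := Int.cast_ne_zero.mpr hn
  -- 2 n² ≠ m²
  have hz : (2 * n^2 - m^2 : ℤ) ≠ 0 := by
    intro h
    have hmm : (m:ℝ)^2 = 2 * (n:ℝ)^2 := by
      have : (m:ℤ)^2 = 2 * n^2 := by omega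
      exact_mod_cast congrArg (Int.cast : ℤ → ℝ) this
    have heq : s * |(n:ℝ)| = |(m:ℝ)| := by
      have h1 : (s * |(n:ℝ)|)^2 = (m:ℝ)^2 := by
        rw [mul_pow, sq_abs, hs2]; linarith
      have := congrArg Real.sqrt h1
      rwa [Real.sqrt_sq (by positivity), Real.sqrt_sq_eq_abs] at this
    apply irrational_sqrt_two
    refine ⟨(|m| : ℚ) / (|n| : ℚ), ?_⟩
    have hne : |(n:ℝ)| ≠ 0 := abs_ne_zero.mpr hn0
    rw [← hs_def]
    push_cast
    rw [div_eq_iff hne, ← heq]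
    try ring
  -- 1 ≤ |y| * |x + m|
  have hprod : (1:ℝ) ≤ |y| * |x + m| := by
    rw [← abs_mul]
    have : y * (x + m) = 2 * (n:ℝ)^2 - (m:ℝ)^2 := by
      rw [hy_def, hx_def]; linear_combination ((n:ℝ)^2) * hs2
    rw [this]
    have h1 : (1:ℤ) ≤ |2 * n^2 - m^2| := Int.one_le_abs hz
    calc (1:ℝ) = ((1:ℤ):ℝ) := by norm_num
      _ ≤ ((|2 * n^2 - m^2| : ℤ) : ℝ) := by exact_mod_cast h1
      _ = |2 * (n:ℝ)^2 - (m:ℝ)^2| := by push_cast; ring_nf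
  have hxabs : |x| = s * |(n:ℝ)| := by
    rw [hx_def, abs_mul, abs_of_nonneg hs0]
  have hsum : |x + m| ≤ 2 * s * |(n:ℝ)| + 1/2 := by
    have h1 : |(m:ℝ)| ≤ |y| + |x| := by
      have hm' : (m:ℝ) = x - y := by rw [hy_def]; ring
      rw [hm', sub_eq_add_neg]
      have := abs_add_le x (-y)
      rw [abs_neg] at this
      linarith
    have h2 := abs_add_le x ((m:ℝ))
    linarith [hd, hxabs]
  -- lower bound on d := |y|
  have hApos : (0:ℝ) < 2 * s * |(n:ℝ)| + 1/2 := by positivity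
  have hdlow : 1 / (2 * s * |(n:ℝ)| + 1/2) ≤ |y| := by
    rw [div_le_iff₀ hApos]
    have hy0 : 0 ≤ |y| := abs_nonneg y
    nlinarith [abs_nonneg (x + (m:ℝ))]
  -- sin bound
  have hsin : 2 * |y| ≤ |Real.sin ((2 * s * Real.pi * (n:ℝ))/2)| := by
    have harg : (2 * s * Real.pi * (n:ℝ))/2 = Real.pi * y + (m:ℤ) * Real.pi := by
      rw [hy_def, hx_def]; push_cast; ring
    rw [harg, Real.sin_add_int_mul_pi, abs_mul]
    have : |((-1:ℝ))^m| = 1 := by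
      rcases Int.even_or_odd m with he | ho
      · rw [he.neg_one_zpow]; norm_num
      · rw [Odd.neg_one_zpow ho]; norm_num
    rw [this, one_mul]
    have habs : |Real.sin (Real.pi * y)| = |Real.sin (Real.pi * |y|)| := by
      rcases abs_cases y with ⟨h1, _⟩ | ⟨h1, _⟩
      · rw [h1]
      · rw [h1, show Real.pi * -y = -(Real.pi * y) from by ring, Real.sin_neg, abs_neg]
    rw [habs]
    have h0 : 0 ≤ Real.pi * |y| := by positivity
    have h1 : Real.pi * |y| ≤ Real.pi / 2 := by
      nlinarith [Real.pi_pos]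
    have := Real.mul_le_sin h0 h1
    rw [abs_of_nonneg (Real.sin_nonneg_of_nonneg_of_le_pi h0 (by nlinarith [Real.pi_pos]))]
    calc 2 * |y| = 2 / Real.pi * (Real.pi * |y|) := by
          field_simp
      _ ≤ Real.sin (Real.pi * |y|) := this
  -- put together
  rw [abs_exp_I_sub_one (2 * s * Real.pi * (n:ℝ))]
  have hfinal : 4 / (2 * s * |(n:ℝ)| + 1) < 4 / (2 * s * |(n:ℝ)| + 1/2) := by
    apply div_lt_div_of_pos_left (by norm_num) hApos
    linarith
  have : 4 / (2 * s * |(n:ℝ)| + 1/2) ≤ 4 * |y| := by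
    rw [div_le_iff₀ hApos]
    nlinarith [hdlow, abs_nonneg y]
  linarith
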